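/- Suppose T is a quasiperiodically forced monotone interval map with differentiable fibre maps and continuous strictly positive fibre derivative, and for each θ the fibre map T_θ is strictly concave on an interval I(θ) = [γ⁻(θ), γ⁺(θ)] ⊆ X. Then there exist at most two T-invariant graphs φ with φ(θ) ∈ I(θ) for all θ; moreover if φ₁ ≤ φ₂ are two distinct such invariant graphs (distinct on a set of positive measure), then λ(φ₁) > 0 and λ(φ₂) < 0. -/

import Mathlib

open Set MeasureTheory

/-- The circle 𝕋¹ = ℝ/ℤ. -/
abbrev Torus := AddCircle (1 : ℝ)

instance : Fact ((0 : ℝ) < 1) := ⟨one_pos⟩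

open Filter


instance : IsProbabilityMeasure (volume : Measure Torus) :=
  ⟨by rw [AddCircle.measure_univ]; norm_num⟩

lemma dense_zsmul_of_irrational {ω : ℝ} (hω : Irrational ω) :
    DenseRange (fun n : ℤ => n • (ω : Torus)) := by
  set S : AddSubgroup ℝ := AddSubgroup.closure {ω, 1} with hS
  have hωS : ω ∈ S := AddSubgroup.subset_closure (by simp)
  have h1S : (1:ℝ) ∈ S := AddSubgroup.subset_closure (by simp)
  have hdense : Dense (S : Set ℝ) := by
    rcases AddSubgroup.dense_or_cyclic S with hd | ⟨a, ha⟩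
    · exact hd
    · exfalso
      rw [ha, AddSubgroup.mem_closure_singleton] at hωS h1S
      obtain ⟨m, hm⟩ := hωS
      obtain ⟨n, hn⟩ := h1S
      have hn0 : (n : ℝ) ≠ 0 := by
        rintro h
        rw [zsmul_eq_mul] at hn
        rw [h] at hn; norm_num at hn
      have ha' : a = 1 / n := by
        rw [zsmul_eq_mul] at hn; field_simp; linarith
      have : ω = ((m / n : ℚ) : ℝ) := by
        rw [zsmul_eq_mul] at hm
        push_cast
        rw [← hm, ha']; ring
      exact hω ⟨_, this.symm⟩
  have hcont : Continuous ((↑) : ℝ → Torus) := continuous_quotient_mk'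
  have hsurj : Function.Surjective ((↑) : ℝ → Torus) := QuotientAddGroup.mk_surjective
  have himg : Dense (((↑) : ℝ → Torus) '' S) :=
    hsurj.denseRange.dense_image hcont hdense
  refine himg.mono ?_
  rintro - ⟨x, hx, rfl⟩
  rw [hS, SetLike.mem_coe] at hx
  obtain ⟨m, n, rfl⟩ := AddSubgroup.mem_closure_pair.mp hx
  refine ⟨m, ?_⟩
  push_cast
  have : ((1:ℝ) : Torus) = 0 := by
    simpa using (AddCircle.coe_period (p := (1:ℝ)))
  simp [this]

lemma cobound (x : Torus) {f : Torus → ℝ} (hf : Measurable f) {K : ℝ} (hK : ∀ θ, f θ ≤ K)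
    {h : Torus → ℝ} (hh : Integrable h volume)
    (hfh : ∀ᵐ θ, h θ = f (θ + x) - f θ) : ∫ θ, h θ = 0 := by
  set g : Torus → ℝ := fun θ => f (θ + x) - f θ with hg
  have hmp : MeasurePreserving (fun θ : Torus => θ + x) volume volume :=
    measurePreserving_add_right volume x
  have hRmeas : Measurable (fun θ : Torus => θ + x) := measurable_add_const x
  -- truncations
  set F : ℕ → Torus → ℝ := fun n θ => max (f θ) (-(n:ℝ)) with hF
  have hFmeas : ∀ n, Measurable (F n) := fun n => hf.max measurable_const
  have hFint : ∀ n, Integrable (F n) volume := by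
    intro n
    refine (integrable_const (max |K| n)).mono' (hFmeas n).aestronglyMeasurable ?_
    filter_upwards with θ
    rw [Real.norm_eq_abs, abs_le]
    constructor
    · have : -(n:ℝ) ≤ F n θ := le_max_right _ _
      have h2 : (n:ℝ) ≤ max |K| n := le_max_right _ _
      linarith
    · have : F n θ ≤ max K (-(n:ℝ)) := max_le_max (hK θ) le_rfl
      have : F n θ ≤ max |K| n := le_trans this (max_le_max (le_abs_self K) (neg_nonpos.mpr n.cast_nonneg |>.trans n.cast_nonneg))
      exact this
  set G : ℕ → Torus → ℝ := fun n θ => F n (θ + x) - F n θ with hG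
  have hGint0 : ∀ n, ∫ θ, G n θ = 0 := by
    intro n
    have hFcomp : Integrable (fun θ => F n (θ + x)) volume :=
      (hmp.map_eq.symm ▸ hFint n : Integrable (F n) _).comp_measurable hRmeas
    rw [integral_sub hFcomp (hFint n)]
    rw [hmp.integral_comp (MeasurableEquiv.addRight x).measurableEmbedding (F n), sub_self]
  have hGbound : ∀ n, ∀ᵐ θ, ‖G n θ‖ ≤ |h θ| := by
    intro n
    filter_upwards [hfh] with θ hθ
    rw [Real.norm_eq_abs, hG]
    calc |F n (θ + x) - F n θ| ≤ |f (θ + x) - f θ| := abs_max_sub_max_le_abs _ _ _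
    _ = |h θ| := by rw [hθ]
  have hGtend : ∀ᵐ θ, Tendsto (fun n => G n θ) atTop (nhds (g θ)) := by
    filter_upwards with θ
    have : ∀ᶠ n : ℕ in atTop, G n θ = g θ := by
      filter_upwards [eventually_ge_atTop (Nat.ceil (max (-f θ) (-f (θ + x))))] with n hn
      have h1 : -(n:ℝ) ≤ f θ := by
        have := (Nat.ceil_le.mp hn : (max (-f θ) (-f (θ+x))) ≤ (n:ℝ))
        have := le_trans (le_max_left _ _) this
        linarith
      have h2 : -(n:ℝ) ≤ f (θ + x) := by
        have := (Nat.ceil_le.mp hn : (max (-f θ) (-f (θ+x))) ≤ (n:ℝ))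
        have := le_trans (le_max_right _ _) this
        linarith
      simp [hG, hF, max_eq_left h1, max_eq_left h2, hg]
    exact Tendsto.congr' (this.mono fun n hn => hn.symm) tendsto_const_nhds
  have hdct := tendsto_integral_of_dominated_convergence (fun θ => |h θ|)
    (fun n => ((hFmeas n).comp hRmeas |>.sub (hFmeas n)).aestronglyMeasurable)
    hh.abs hGbound hGtend
  have : (∫ θ, g θ) = 0 := tendsto_nhds_unique hdct ((tendsto_const_nhds : Tendsto (fun _ : ℕ => (0:ℝ)) atTop (nhds 0)).congr fun n => (hGint0 n).symm)
  rw [integral_congr_ae hfh, this]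

lemma int_lt_int {g h : Torus → ℝ} (hg : Integrable g volume) (hh : Integrable h volume)
    (hlt : ∀ᵐ θ, g θ < h θ) : ∫ θ, g θ < ∫ θ, h θ := by
  have hsub : Integrable (fun θ => h θ - g θ) volume := hh.sub hg
  have hnn : 0 ≤ᵐ[volume] fun θ => h θ - g θ := by
    filter_upwards [hlt] with θ hθ; simp [le_of_lt hθ]
  have hpos : 0 < ∫ θ, (h θ - g θ) := by
    rw [integral_pos_iff_support_of_nonneg_ae hnn hsub]
    have hcompl : volume ((Function.support fun θ => h θ - g θ)ᶜ) = 0 := by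
      refine measure_mono_null ?_ hlt
      intro θ hθ
      simp only [Function.mem_support, not_not, Set.mem_compl_iff] at hθ ⊢
      intro hc; rw [sub_eq_zero] at hθ; exact absurd hθ.symm (ne_of_lt hc)
    by_contra hzero
    push_neg at hzero
    have h0 : volume (Function.support fun θ => h θ - g θ) = 0 := le_antisymm hzero (zero_le)
    have := measure_union_le (μ := (volume : Measure Torus))
      (Function.support fun θ => h θ - g θ) ((Function.support fun θ => h θ - g θ)ᶜ)
    rw [Set.union_compl_self, h0, hcompl, measure_univ] at this
    simp at this
  have := integral_sub hh hg
  linarith [this ▸ hpos]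

lemma erg (ω' : Torus) (hd : DenseRange (fun n : ℤ => n • ω')) {A : Set Torus}
    (hA : MeasurableSet A) (hinv : (fun θ => θ + ω') ⁻¹' A = A) :
    volume A = 0 ∨ volume Aᶜ = 0 := by
  have hE : Ergodic (fun θ => ω' + θ) volume := ergodic_add_left_of_denseRange_zsmul hd volume
  have hinv' : (fun θ => ω' + θ) ⁻¹' A = A := by
    ext θ
    have := Set.ext_iff.mp hinv θ
    simpa [add_comm] using this
  rcases hE.ae_empty_or_univ hA hinv' with h | h
  · left; simpa [ae_eq_empty] using h
  · right; simpa [ae_eq_univ] using h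

set_option maxHeartbeats 2000000 in
lemma med_lt (x y z : ℝ) (hxy : x ≠ y) (hxz : x ≠ z) (hyz : y ≠ z) :
    min x (min y z) < max (min x y) (max (min y z) (min x z)) ∧
      max (min x y) (max (min y z) (min x z)) < max x (max y z) := by
  rcases lt_or_gt_of_ne hxy with h1 | h1 <;> rcases lt_or_gt_of_ne hxz with h2 | h2 <;>
    rcases lt_or_gt_of_ne hyz with h3 | h3 <;>
  · constructor <;> simp only [min_def, max_def] <;> split_ifs <;> linarith


/-- **Keller's concavity theorem.** For a quasiperiodically forced C¹ monotone interval map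
whose fibre maps are strictly concave on a band `I(θ) = [γ⁻ θ, γ⁺ θ]`, there are at most two
invariant graphs taking values in the band (any three agree a.e. in pairs); moreover if
`φ₁ ≤ φ₂` are two such invariant graphs which are not a.e. equal, then the Lyapunov exponent
of `φ₁` is positive and that of `φ₂` is negative. -/
theorem concave_fibres_at_most_two_graphs
    (ω : ℝ) (hω : Irrational ω) (a b : ℝ) (hab : a ≤ b)
    (T DT : Torus → ℝ → ℝ) (γm γp : Torus → ℝ)
    (hmaps : ∀ θ, MapsTo (T θ) (Icc a b) (Icc a b))
    (hmono : ∀ θ, MonotoneOn (T θ) (Icc a b))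
    (hcont : Continuous fun p : Torus × ℝ => T p.1 p.2)
    (hDTcont : Continuous fun p : Torus × ℝ => DT p.1 p.2)
    (hDTpos : ∀ θ x, 0 < DT θ x)
    (hderiv : ∀ θ x, HasDerivAt (T θ) (DT θ x) x)
    (hγmeas : Measurable γm) (hγpmeas : Measurable γp)
    (hγmem : ∀ θ, γm θ ∈ Icc a b ∧ γp θ ∈ Icc a b)
    (hconc : ∀ θ, StrictConcaveOn ℝ (Icc (γm θ) (γp θ)) (T θ)) :
    (∀ φ₁ φ₂ φ₃ : Torus → ℝ,
      Measurable φ₁ → Measurable φ₂ → Measurable φ₃ →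
      (∀ θ, φ₁ θ ∈ Icc (γm θ) (γp θ)) →
      (∀ θ, φ₂ θ ∈ Icc (γm θ) (γp θ)) →
      (∀ θ, φ₃ θ ∈ Icc (γm θ) (γp θ)) →
      (∀ θ, T θ (φ₁ θ) = φ₁ (θ + (ω : Torus))) →
      (∀ θ, T θ (φ₂ θ) = φ₂ (θ + (ω : Torus))) →
      (∀ θ, T θ (φ₃ θ) = φ₃ (θ + (ω : Torus))) →
      (φ₁ =ᵐ[volume] φ₂ ∨ φ₁ =ᵐ[volume] φ₃ ∨ φ₂ =ᵐ[volume] φ₃)) ∧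
    (∀ φ₁ φ₂ : Torus → ℝ,
      Measurable φ₁ → Measurable φ₂ →
      (∀ θ, φ₁ θ ∈ Icc (γm θ) (γp θ)) →
      (∀ θ, φ₂ θ ∈ Icc (γm θ) (γp θ)) →
      (∀ θ, T θ (φ₁ θ) = φ₁ (θ + (ω : Torus))) →
      (∀ θ, T θ (φ₂ θ) = φ₂ (θ + (ω : Torus))) →
      (∀ θ, φ₁ θ ≤ φ₂ θ) → ¬ (φ₁ =ᵐ[volume] φ₂) →
      (0 < ∫ θ : Torus, Real.log (DT θ (φ₁ θ))) ∧
        (∫ θ : Torus, Real.log (DT θ (φ₂ θ))) < 0) := by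
  set ω' : Torus := (ω : Torus) with hω'
  have hd : DenseRange (fun n : ℤ => n • ω') := dense_zsmul_of_irrational hω
  have hRmeas : Measurable (fun θ : Torus => θ + ω') := measurable_add_const ω'
  have hTsm : ∀ θ, StrictMono (T θ) := by
    intro θ
    apply strictMono_of_deriv_pos
    intro x
    rw [(hderiv θ x).deriv]
    exact hDTpos θ x
  have hband : ∀ θ, Icc (γm θ) (γp θ) ⊆ Icc a b := fun θ =>
    Icc_subset_Icc (hγmem θ).1.1 (hγmem θ).2.2
  -- uniform bounds on DT over the compact set
  obtain ⟨c, C, hc, hDTlb, hDTub⟩ : ∃ c C : ℝ, 0 < c ∧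
      (∀ θ x, x ∈ Icc a b → c ≤ DT θ x) ∧ (∀ θ x, x ∈ Icc a b → DT θ x ≤ C) := by
    have hK : IsCompact ((univ : Set Torus) ×ˢ Icc a b) := isCompact_univ.prod isCompact_Icc
    have hKne : ((univ : Set Torus) ×ˢ Icc a b).Nonempty :=
      ⟨((0 : Torus), a), mem_prod.mpr ⟨mem_univ _, left_mem_Icc.mpr hab⟩⟩
    obtain ⟨p, _, hp⟩ := hK.exists_isMinOn hKne hDTcont.continuousOn
    obtain ⟨q, _, hq⟩ := hK.exists_isMaxOn hKne hDTcont.continuousOn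
    refine ⟨DT p.1 p.2, DT q.1 q.2, hDTpos _ _, ?_, ?_⟩
    · intro θ x hx
      exact hp (show (θ, x) ∈ (univ : Set Torus) ×ˢ Icc a b from mem_prod.mpr ⟨mem_univ _, hx⟩)
    · intro θ x hx
      exact hq (show (θ, x) ∈ (univ : Set Torus) ×ˢ Icc a b from mem_prod.mpr ⟨mem_univ _, hx⟩)
  have hlogDTmeas : ∀ {φ : Torus → ℝ}, Measurable φ →
      Measurable (fun θ => Real.log (DT θ (φ θ))) := fun {φ} hφ =>
    Real.measurable_log.comp (hDTcont.measurable.comp (measurable_id.prodMk hφ))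
  have hlogDTint : ∀ {φ : Torus → ℝ}, Measurable φ → (∀ θ, φ θ ∈ Icc (γm θ) (γp θ)) →
      Integrable (fun θ => Real.log (DT θ (φ θ))) volume := by
    intro φ hφ hmem
    refine (integrable_const (max |Real.log c| |Real.log C|)).mono'
      (hlogDTmeas hφ).aestronglyMeasurable ?_
    filter_upwards with θ
    have hx : φ θ ∈ Icc a b := hband θ (hmem θ)
    have h1 : Real.log c ≤ Real.log (DT θ (φ θ)) := Real.log_le_log hc (hDTlb θ _ hx)
    have h2 : Real.log (DT θ (φ θ)) ≤ Real.log C :=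
      Real.log_le_log (hDTpos θ _) (hDTub θ _ hx)
    rw [Real.norm_eq_abs, abs_le]
    constructor
    · have := neg_abs_le (Real.log c)
      have h3 : -(max |Real.log c| |Real.log C|) ≤ -|Real.log c| :=
        neg_le_neg (le_max_left _ _)
      linarith
    · have := le_abs_self (Real.log C)
      have h3 : |Real.log C| ≤ max |Real.log c| |Real.log C| := le_max_right _ _
      linarith
  -- the key statement (part 2)
  have key : ∀ φ₁ φ₂ : Torus → ℝ,
      Measurable φ₁ → Measurable φ₂ →
      (∀ θ, φ₁ θ ∈ Icc (γm θ) (γp θ)) →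
      (∀ θ, φ₂ θ ∈ Icc (γm θ) (γp θ)) →
      (∀ θ, T θ (φ₁ θ) = φ₁ (θ + ω')) →
      (∀ θ, T θ (φ₂ θ) = φ₂ (θ + ω')) →
      (∀ θ, φ₁ θ ≤ φ₂ θ) → ¬ (φ₁ =ᵐ[volume] φ₂) →
      (0 < ∫ θ : Torus, Real.log (DT θ (φ₁ θ))) ∧
        (∫ θ : Torus, Real.log (DT θ (φ₂ θ))) < 0 := by
    intro φ₁ φ₂ hm1 hm2 hb1 hb2 hi1 hi2 hle hne
    set A : Set Torus := {θ | φ₁ θ < φ₂ θ} with hA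
    have hAmeas : MeasurableSet A := measurableSet_lt hm1 hm2
    have hAinv : (fun θ => θ + ω') ⁻¹' A = A := by
      ext θ
      simp only [Set.mem_preimage, hA, Set.mem_setOf_eq]
      rw [← hi1 θ, ← hi2 θ]
      exact (hTsm θ).lt_iff_lt
    rcases erg ω' hd hAmeas hAinv with h0 | h1
    · exfalso
      apply hne
      have hnm : ∀ᵐ θ, θ ∉ A := measure_eq_zero_iff_ae_notMem.mp h0
      filter_upwards [hnm] with θ hθ
      exact le_antisymm (hle θ) (not_lt.mp hθ)
    have hAae : ∀ᵐ θ, θ ∈ A := by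
      have := measure_eq_zero_iff_ae_notMem.mp h1
      filter_upwards [this] with θ hθ
      simpa using hθ
    -- f = log of the gap
    set f : Torus → ℝ := fun θ => Real.log (φ₂ θ - φ₁ θ) with hf
    have hfmeas : Measurable f := Real.measurable_log.comp (hm2.sub hm1)
    have hfK : ∀ θ, f θ ≤ max 0 (Real.log (b - a)) := by
      intro θ
      rcases eq_or_lt_of_le (hle θ) with h | h
      · simp [hf, ← h, Real.log_zero]
      · have u1 := hband θ (hb1 θ)
        have u2 := hband θ (hb2 θ)
        have h2 : φ₂ θ - φ₁ θ ≤ b - a := by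
          have := u1.1; have := u2.2; linarith
        have := Real.log_le_log (by linarith) h2
        exact le_trans this (le_max_right _ _)
    -- h = log of the ratio
    set h : Torus → ℝ :=
      fun θ => Real.log ((φ₂ (θ + ω') - φ₁ (θ + ω')) / (φ₂ θ - φ₁ θ)) with hh
    have hhmeas : Measurable h :=
      Real.measurable_log.comp
        (((hm2.comp hRmeas).sub (hm1.comp hRmeas)).div (hm2.sub hm1))
    -- the ratio is the slope, pinched between the derivatives
    have hpinch : ∀ θ, θ ∈ A →
        DT θ (φ₂ θ) < (φ₂ (θ + ω') - φ₁ (θ + ω')) / (φ₂ θ - φ₁ θ) ∧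
          (φ₂ (θ + ω') - φ₁ (θ + ω')) / (φ₂ θ - φ₁ θ) < DT θ (φ₁ θ) := by
      intro θ hθ
      have hxy : φ₁ θ < φ₂ θ := hθ
      have hs1 := (hconc θ).slope_lt_of_hasDerivAt (hb1 θ) (hb2 θ) hxy (hderiv θ (φ₁ θ))
      have hs2 := (hconc θ).lt_slope_of_hasDerivAt (hb1 θ) (hb2 θ) hxy (hderiv θ (φ₂ θ))
      rw [slope_def_field, hi1 θ, hi2 θ] at hs1 hs2
      exact ⟨hs2, hs1⟩
    have hmemA : ∀ θ, θ ∈ A → θ + ω' ∈ A := by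
      intro θ hθ
      have := Set.ext_iff.mp hAinv θ
      exact this.mpr hθ
    -- integrability of h
    have hhint : Integrable h volume := by
      refine (integrable_const (max |Real.log c| |Real.log C|)).mono'
        hhmeas.aestronglyMeasurable ?_
      filter_upwards [hAae] with θ hθ
      obtain ⟨hp1, hp2⟩ := hpinch θ hθ
      have hcle : c ≤ DT θ (φ₂ θ) := hDTlb θ _ (hband θ (hb2 θ))
      have hCge : DT θ (φ₁ θ) ≤ C := hDTub θ _ (hband θ (hb1 θ))
      have hr1 : Real.log c ≤ h θ := by
        refine le_trans (Real.log_le_log hc (le_of_lt (lt_of_le_of_lt hcle hp1))) le_rfl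
      have hr2 : h θ ≤ Real.log C := by
        refine Real.log_le_log ?_ (le_of_lt (lt_of_lt_of_le hp2 hCge))
        linarith [lt_of_le_of_lt hcle hp1, hc]
      rw [Real.norm_eq_abs, abs_le]
      constructor
      · have h3 : -(max |Real.log c| |Real.log C|) ≤ -|Real.log c| :=
          neg_le_neg (le_max_left _ _)
        have := neg_abs_le (Real.log c)
        linarith
      · have := le_abs_self (Real.log C)
        have h3 : |Real.log C| ≤ max |Real.log c| |Real.log C| := le_max_right _ _
        linarith
    -- h is the coboundary of f
    have hcob : ∀ᵐ θ, h θ = f (θ + ω') - f θ := by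
      filter_upwards [hAae] with θ hθ
      have h1 : (0:ℝ) < φ₂ θ - φ₁ θ := sub_pos.mpr hθ
      have h2 : (0:ℝ) < φ₂ (θ + ω') - φ₁ (θ + ω') := sub_pos.mpr (hmemA θ hθ)
      simp only [hh, hf]
      rw [Real.log_div (ne_of_gt h2) (ne_of_gt h1)]
    have hint0 : ∫ θ, h θ = 0 := cobound ω' hfmeas hfK hhint hcob
    constructor
    · have hlt : ∀ᵐ θ, h θ < Real.log (DT θ (φ₁ θ)) := by
        filter_upwards [hAae] with θ hθ
        obtain ⟨hp1, hp2⟩ := hpinch θ hθ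
        have hcle : c ≤ DT θ (φ₂ θ) := hDTlb θ _ (hband θ (hb2 θ))
        exact Real.log_lt_log (by linarith [lt_of_le_of_lt hcle hp1]) hp2
      have := int_lt_int hhint (hlogDTint hm1 hb1) hlt
      rw [hint0] at this
      exact this
    · have hlt : ∀ᵐ θ, Real.log (DT θ (φ₂ θ)) < h θ := by
        filter_upwards [hAae] with θ hθ
        obtain ⟨hp1, hp2⟩ := hpinch θ hθ
        exact Real.log_lt_log (hDTpos θ _) hp1
      have := int_lt_int (hlogDTint hm2 hb2) hhint hlt
      rw [hint0] at this
      exact this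
  refine ⟨?_, key⟩
  intro φ₁ φ₂ φ₃ hm1 hm2 hm3 hb1 hb2 hb3 hi1 hi2 hi3
  by_contra hcon
  push_neg at hcon
  obtain ⟨h12, h13, h23⟩ := hcon
  have hnull : ∀ (φ ψ : Torus → ℝ), Measurable φ → Measurable ψ →
      (∀ θ, T θ (φ θ) = φ (θ + ω')) → (∀ θ, T θ (ψ θ) = ψ (θ + ω')) →
      ¬(φ =ᵐ[volume] ψ) → volume {θ | φ θ = ψ θ} = 0 := by
    intro φ ψ hmφ hmψ hiφ hiψ hne
    have hmeasE : MeasurableSet {θ | φ θ = ψ θ} := measurableSet_eq_fun hmφ hmψ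
    have hinvE : (fun θ => θ + ω') ⁻¹' {θ | φ θ = ψ θ} = {θ | φ θ = ψ θ} := by
      ext θ
      simp only [Set.mem_preimage, Set.mem_setOf_eq]
      rw [← hiφ θ, ← hiψ θ]
      exact ⟨fun h => (hTsm θ).injective h, fun h => by rw [h]⟩
    rcases erg ω' hd hmeasE hinvE with h | h
    · exact h
    · exfalso
      apply hne
      have := measure_eq_zero_iff_ae_notMem.mp h
      filter_upwards [this] with θ hθ
      simpa using hθ
  have n12 := hnull φ₁ φ₂ hm1 hm2 hi1 hi2 h12
  have n13 := hnull φ₁ φ₃ hm1 hm3 hi1 hi3 h13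
  have n23 := hnull φ₂ φ₃ hm2 hm3 hi2 hi3 h23
  have hdist : ∀ᵐ θ, φ₁ θ ≠ φ₂ θ ∧ φ₁ θ ≠ φ₃ θ ∧ φ₂ θ ≠ φ₃ θ := by
    filter_upwards [measure_eq_zero_iff_ae_notMem.mp n12, measure_eq_zero_iff_ae_notMem.mp n13,
      measure_eq_zero_iff_ae_notMem.mp n23] with θ a1 a2 a3
    exact ⟨by simpa using a1, by simpa using a2, by simpa using a3⟩
  -- the three sorted graphs
  set m₁ : Torus → ℝ := fun θ => min (φ₁ θ) (min (φ₂ θ) (φ₃ θ)) with hm₁def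
  set m₂ : Torus → ℝ := fun θ =>
    max (min (φ₁ θ) (φ₂ θ)) (max (min (φ₂ θ) (φ₃ θ)) (min (φ₁ θ) (φ₃ θ))) with hm₂def
  set m₃ : Torus → ℝ := fun θ => max (φ₁ θ) (max (φ₂ θ) (φ₃ θ)) with hm₃def
  have hm₁meas : Measurable m₁ := hm1.min (hm2.min hm3)
  have hm₂meas : Measurable m₂ := (hm1.min hm2).max ((hm2.min hm3).max (hm1.min hm3))
  have hm₃meas : Measurable m₃ := hm1.max (hm2.max hm3)
  have hminmem : ∀ {u v l r : ℝ}, u ∈ Icc l r → v ∈ Icc l r → min u v ∈ Icc l r :=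
    fun hu hv => ⟨le_min hu.1 hv.1, le_trans (min_le_left _ _) hu.2⟩
  have hmaxmem : ∀ {u v l r : ℝ}, u ∈ Icc l r → v ∈ Icc l r → max u v ∈ Icc l r :=
    fun hu hv => ⟨le_trans hu.1 (le_max_left _ _), max_le hu.2 hv.2⟩
  have hb₁ : ∀ θ, m₁ θ ∈ Icc (γm θ) (γp θ) := fun θ =>
    hminmem (hb1 θ) (hminmem (hb2 θ) (hb3 θ))
  have hb₂ : ∀ θ, m₂ θ ∈ Icc (γm θ) (γp θ) := fun θ =>
    hmaxmem (hminmem (hb1 θ) (hb2 θ)) (hmaxmem (hminmem (hb2 θ) (hb3 θ)) (hminmem (hb1 θ) (hb3 θ)))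
  have hb₃ : ∀ θ, m₃ θ ∈ Icc (γm θ) (γp θ) := fun θ =>
    hmaxmem (hb1 θ) (hmaxmem (hb2 θ) (hb3 θ))
  have hi₁ : ∀ θ, T θ (m₁ θ) = m₁ (θ + ω') := by
    intro θ
    simp only [hm₁def]
    rw [(hTsm θ).monotone.map_min, (hTsm θ).monotone.map_min, hi1 θ, hi2 θ, hi3 θ]
  have hi₂ : ∀ θ, T θ (m₂ θ) = m₂ (θ + ω') := by
    intro θ
    simp only [hm₂def]
    rw [(hTsm θ).monotone.map_max, (hTsm θ).monotone.map_min, (hTsm θ).monotone.map_max,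
      (hTsm θ).monotone.map_min, (hTsm θ).monotone.map_min, hi1 θ, hi2 θ, hi3 θ]
  have hi₃ : ∀ θ, T θ (m₃ θ) = m₃ (θ + ω') := by
    intro θ
    simp only [hm₃def]
    rw [(hTsm θ).monotone.map_max, (hTsm θ).monotone.map_max, hi1 θ, hi2 θ, hi3 θ]
  have hle₁₂ : ∀ θ, m₁ θ ≤ m₂ θ := by
    intro θ
    refine le_trans ?_ (le_max_left _ _)
    exact le_min (min_le_left _ _) (le_trans (min_le_right _ _) (min_le_left _ _))
  have hle₂₃ : ∀ θ, m₂ θ ≤ m₃ θ := by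
    intro θ
    refine max_le ?_ (max_le ?_ ?_)
    · exact le_trans (min_le_left _ _) (le_max_left _ _)
    · exact le_trans (min_le_left _ _) (le_trans (le_max_left _ _) (le_max_right _ _))
    · exact le_trans (min_le_left _ _) (le_max_left _ _)
  have hne₁₂ : ¬ (m₁ =ᵐ[volume] m₂) := by
    intro hEq
    obtain ⟨θ, hEqθ, hd1, hd2, hd3⟩ := (hEq.and hdist).exists
    exact absurd hEqθ (ne_of_lt ((med_lt (φ₁ θ) (φ₂ θ) (φ₃ θ) hd1 hd2 hd3).1))
  have hne₂₃ : ¬ (m₂ =ᵐ[volume] m₃) := by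
    intro hEq
    obtain ⟨θ, hEqθ, hd1, hd2, hd3⟩ := (hEq.and hdist).exists
    exact absurd hEqθ (ne_of_lt ((med_lt (φ₁ θ) (φ₂ θ) (φ₃ θ) hd1 hd2 hd3).2))
  obtain ⟨p1, p2⟩ := key m₁ m₂ hm₁meas hm₂meas hb₁ hb₂ hi₁ hi₂ hle₁₂ hne₁₂
  obtain ⟨q1, q2⟩ := key m₂ m₃ hm₂meas hm₃meas hb₂ hb₃ hi₂ hi₃ hle₂₃ hne₂₃
  linarith
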